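/- Let $(X^{(c)})_{c \in \mathbb{N}}$ be random variables with values in $\mathbb{N}$ and $\mathbb{E}[X^{(c)}] = c/\mu$, and let $X^{(\infty)}$ be a random variable with values in $\mathbb{R}_+$ and mean $1/\mu$. Define $\bar{X}^{(c)}$ by $\mathbb{P}(\bar{X}^{(c)} \le y) = (\mu/c) \sum_{z=1}^{y} \mathbb{P}(X^{(c)} \ge z)$ for $y \in \mathbb{N}$, and $\bar{X}^{(\infty)}$ by $\mathbb{P}(\bar{X}^{(\infty)} \le y) = \mu \int_0^y \mathbb{P}(X^{(\infty)} \ge z)\,dz$. If $X^{(c)}/c$ converges weakly to $X^{(\infty)}$ as $c \to \infty$, then $\bar{X}^{(c)}/c$ converges weakly to $\bar{X}^{(\infty)}$. -/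

import Mathlib

open MeasureTheory Filter Topology BoundedContinuousFunction

open Set
open scoped NNReal ENNReal

/-- Step-function lintegral computation. -/
lemma step_lintegral (d : ℕ → ENNReal) (c : ℝ) (hc : 0 < c) (n : ℕ) :
    ∫⁻ z in Set.Ioc (0:ℝ) ((n:ℝ)/c), d ⌈c*z⌉₊
      = (∑ k ∈ Finset.Icc 1 n, d k) * ENNReal.ofReal (1/c) := by
  induction n with
  | zero => simp
  | succ n ih =>
    have h0 : (0:ℝ) ≤ (n:ℝ)/c := by positivity
    have h1 : ((n:ℝ))/c ≤ ((n+1:ℕ):ℝ)/c := by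
      gcongr
      push_cast; linarith
    rw [← Set.Ioc_union_Ioc_eq_Ioc h0 h1, lintegral_union measurableSet_Ioc
      (Set.Ioc_disjoint_Ioc_of_le le_rfl), ih]
    have hcongr : ∫⁻ z in Set.Ioc ((n:ℝ)/c) (((n+1:ℕ):ℝ)/c), d ⌈c*z⌉₊
        = ∫⁻ _ in Set.Ioc ((n:ℝ)/c) (((n+1:ℕ):ℝ)/c), d (n+1) := by
      apply setLIntegral_congr_fun measurableSet_Ioc
      intro z (hz : z ∈ Set.Ioc ((n:ℝ)/c) (((n+1:ℕ):ℝ)/c)); show d ⌈c*z⌉₊ = d (n+1)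
      have h2 : (n:ℝ) < c * z := by
        have := hz.1; rw [div_lt_iff₀ hc] at this; linarith [this]
      have h3 : c * z ≤ (n+1:ℝ) := by
        have := hz.2; rw [le_div_iff₀ hc] at this; push_cast at this ⊢; linarith
      have : ⌈c*z⌉₊ = n+1 := by
        rw [Nat.ceil_eq_iff (Nat.succ_ne_zero n)]
        constructor
        · simpa using h2
        · push_cast; exact h3
      rw [this]
    rw [hcongr, setLIntegral_const]
    have hvol : volume (Set.Ioc ((n:ℝ)/c) (((n+1:ℕ):ℝ)/c)) = ENNReal.ofReal (1/c) := by
      rw [Real.volume_Ioc]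
      congr 1
      push_cast
      field_simp; ring
    rw [hvol, Finset.sum_Icc_succ_top (by omega : 1 ≤ n+1), add_mul]

lemma key_conv (h : ℕ → ℝ → ℝ) (h' : ℝ → ℝ) (g : ℕ → ℝ → ℝ) (g' : ℝ → ℝ) (B K : ℝ)
    (hK : 0 ≤ K)
    (hmeas : ∀ n, AEStronglyMeasurable (h n) (volume.restrict (Set.Ioi 0)))
    (gmeas : ∀ n, AEStronglyMeasurable (g n) (volume.restrict (Set.Ioi 0)))
    (h'meas : AEStronglyMeasurable h' (volume.restrict (Set.Ioi 0)))
    (g'meas : AEStronglyMeasurable g' (volume.restrict (Set.Ioi 0)))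
    (hnn : ∀ n z, 0 ≤ h n z) (hbd : ∀ n z, h n z ≤ B)
    (h'int : IntegrableOn h' (Set.Ioi 0))
    (gbd : ∀ n z, |g n z| ≤ K) (g'bd : ∀ z, |g' z| ≤ K)
    (hpt : ∀ᵐ z ∂(volume.restrict (Set.Ioi 0)),
      Tendsto (fun n => h n z) atTop (𝓝 (h' z))
        ∧ Tendsto (fun n => g n z) atTop (𝓝 (g' z)))
    (hmass : ∀ n, ∫ z in Set.Ioi (0:ℝ), h n z = 1)
    (hmass' : ∫ z in Set.Ioi (0:ℝ), h' z = 1) :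
    Tendsto (fun n => ∫ z in Set.Ioi (0:ℝ), h n z * g n z) atTop
      (𝓝 (∫ z in Set.Ioi (0:ℝ), h' z * g' z)) := by
  have hint : ∀ n, IntegrableOn (h n) (Set.Ioi 0) := by
    intro n
    by_contra hc
    have := hmass n
    rw [MeasureTheory.integral_undef hc] at this
    exact one_ne_zero this.symm
  have hprodint : ∀ n, IntegrableOn (fun z => h n z * g n z) (Set.Ioi 0) := by
    intro n
    refine Integrable.mono' ((hint n).const_mul K) ((hmeas n).mul (gmeas n)) ?_
    refine Filter.Eventually.of_forall (fun z => ?_)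
    rw [Real.norm_eq_abs, abs_mul, abs_of_nonneg (hnn n z)]
    exact mul_le_mul_of_nonneg_left (gbd n z) (hnn n z) |>.trans_eq (mul_comm _ _)
  have h'prodint : IntegrableOn (fun z => h' z * g' z) (Set.Ioi 0) := by
    have h'nn : ∀ᵐ z ∂(volume.restrict (Set.Ioi (0:ℝ))), 0 ≤ h' z := by
      filter_upwards [hpt] with z hz
      exact le_of_tendsto_of_tendsto' tendsto_const_nhds hz.1 (fun n => hnn n z)
    refine Integrable.mono' (h'int.const_mul K) (h'meas.mul g'meas) ?_
    filter_upwards [h'nn] with z hz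
    rw [Real.norm_eq_abs, abs_mul, abs_of_nonneg hz]
    exact mul_le_mul_of_nonneg_left (g'bd z) hz |>.trans_eq (mul_comm _ _)
  rw [Metric.tendsto_atTop]
  intro ε hε
  set ε' := ε / (1 + 3*K) with hε'def
  have hε' : 0 < ε' := by positivity
  -- choose M
  have hUnion : (⋃ n : ℕ, Set.Ioc (0:ℝ) (n:ℝ)) = Set.Ioi 0 := by
    ext z
    simp only [Set.mem_iUnion, Set.mem_Ioc, Set.mem_Ioi]
    constructor
    · rintro ⟨n, hn, -⟩; exact hn
    · intro hz
      obtain ⟨n, hn⟩ := exists_nat_ge z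
      exact ⟨n, hz, hn⟩
  have hmono : Monotone (fun n : ℕ => Set.Ioc (0:ℝ) (n:ℝ)) := by
    intro a b hab
    exact Set.Ioc_subset_Ioc le_rfl (by exact_mod_cast hab)
  have hMlim : Tendsto (fun M : ℕ => ∫ z in Set.Ioc (0:ℝ) (M:ℝ), h' z) atTop
      (𝓝 (1:ℝ)) := by
    have := tendsto_setIntegral_of_monotone (fun n : ℕ => measurableSet_Ioc) hmono
      (by rw [hUnion]; exact h'int)
    rw [hUnion, hmass'] at this
    exact this
  obtain ⟨M, hM⟩ := (hMlim.eventually (eventually_gt_nhds (by linarith : 1 - ε' < 1))).exists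
  -- splitting
  have hM0 : (0:ℝ) ≤ (M:ℝ) := Nat.cast_nonneg M
  have hsplit : ∀ F : ℝ → ℝ, IntegrableOn F (Set.Ioi 0) →
      ∫ z in Set.Ioi (0:ℝ), F z
        = (∫ z in Set.Ioc (0:ℝ) (M:ℝ), F z) + ∫ z in Set.Ioi (M:ℝ), F z := by
    intro F hF
    rw [← Set.Ioc_union_Ioi_eq_Ioi hM0]
    exact setIntegral_union (Set.Ioc_disjoint_Ioi le_rfl) measurableSet_Ioi
      (hF.mono_set (by rw [← Set.Ioc_union_Ioi_eq_Ioi hM0]; exact Set.subset_union_left))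
      (hF.mono_set (by rw [← Set.Ioc_union_Ioi_eq_Ioi hM0]; exact Set.subset_union_right))
  -- transfer a.e. facts to Ioc 0 M
  have hsub : Set.Ioc (0:ℝ) (M:ℝ) ⊆ Set.Ioi 0 := Set.Ioc_subset_Ioi_self
  have hptM := ae_restrict_of_ae_restrict_of_subset hsub hpt
  have hle : volume.restrict (Set.Ioc (0:ℝ) (M:ℝ)) ≤ volume.restrict (Set.Ioi 0) :=
    Measure.restrict_mono hsub le_rfl
  -- DCT on Ioc 0 M for h*g
  have hDCT1 : Tendsto (fun n => ∫ z in Set.Ioc (0:ℝ) (M:ℝ), h n z * g n z) atTop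
      (𝓝 (∫ z in Set.Ioc (0:ℝ) (M:ℝ), h' z * g' z)) := by
    refine tendsto_integral_of_dominated_convergence (fun _ => B*K)
      (fun n => ((hmeas n).mono_measure hle).mul ((gmeas n).mono_measure hle)) ?_ ?_ ?_
    · exact (integrableOn_const_iff).mpr (Or.inr (Real.volume_Ioc ▸ ENNReal.ofReal_lt_top))
    · intro n
      refine Filter.Eventually.of_forall (fun z => ?_)
      rw [Real.norm_eq_abs, abs_mul, abs_of_nonneg (hnn n z)]
      exact mul_le_mul (hbd n z) (gbd n z) (abs_nonneg _)
        (le_trans (hnn n z) (hbd n z))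
    · filter_upwards [hptM] with z hz
      exact hz.1.mul hz.2
  -- DCT on Ioc 0 M for h
  have hDCT2 : Tendsto (fun n => ∫ z in Set.Ioc (0:ℝ) (M:ℝ), h n z) atTop
      (𝓝 (∫ z in Set.Ioc (0:ℝ) (M:ℝ), h' z)) := by
    refine tendsto_integral_of_dominated_convergence (fun _ => B)
      (fun n => (hmeas n).mono_measure hle) ?_ ?_ ?_
    · exact (integrableOn_const_iff).mpr (Or.inr (Real.volume_Ioc ▸ ENNReal.ofReal_lt_top))
    · intro n
      exact Filter.Eventually.of_forall (fun z => by
        rw [Real.norm_eq_abs, abs_of_nonneg (hnn n z)]; exact hbd n z)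
    · filter_upwards [hptM] with z hz
      exact hz.1
  -- tail bounds
  have htail : ∀ n, |∫ z in Set.Ioi (M:ℝ), h n z * g n z|
      ≤ K * ∫ z in Set.Ioi (M:ℝ), h n z := by
    intro n
    rw [← Real.norm_eq_abs, ← integral_const_mul]
    refine norm_integral_le_of_norm_le (((hint n).mono_set
      (Set.Ioi_subset_Ioi hM0)).const_mul K) ?_
    refine Filter.Eventually.of_forall (fun z => ?_)
    rw [Real.norm_eq_abs, abs_mul, abs_of_nonneg (hnn n z)]
    calc h n z * |g n z| ≤ h n z * K := mul_le_mul_of_nonneg_left (gbd n z) (hnn n z)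
    _ = K * h n z := mul_comm _ _
  have h'tailbd : |∫ z in Set.Ioi (M:ℝ), h' z * g' z|
      ≤ K * ∫ z in Set.Ioi (M:ℝ), h' z := by
    rw [← Real.norm_eq_abs, ← integral_const_mul]
    refine norm_integral_le_of_norm_le ((h'int.mono_set
      (Set.Ioi_subset_Ioi hM0)).const_mul K) ?_
    have h'nn : ∀ᵐ z ∂(volume.restrict (Set.Ioi (0:ℝ))), 0 ≤ h' z := by
      filter_upwards [hpt] with z hz
      exact le_of_tendsto_of_tendsto' tendsto_const_nhds hz.1 (fun n => hnn n z)
    filter_upwards [ae_restrict_of_ae_restrict_of_subset (Set.Ioi_subset_Ioi hM0) h'nn]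
      with z hz
    rw [Real.norm_eq_abs, abs_mul, abs_of_nonneg hz]
    calc h' z * |g' z| ≤ h' z * K := mul_le_mul_of_nonneg_left (g'bd z) hz
    _ = K * h' z := mul_comm _ _
  -- the tail of h' is small
  have h'tail : ∫ z in Set.Ioi (M:ℝ), h' z < ε' := by
    have := hsplit h' h'int
    rw [hmass'] at this
    linarith [hM]
  -- eventual bounds
  have e1 := Metric.tendsto_atTop.mp hDCT1 ε' hε'
  have e2 := Metric.tendsto_atTop.mp hDCT2 ε' hε'
  obtain ⟨N₁, hN₁⟩ := e1
  obtain ⟨N₂, hN₂⟩ := e2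
  refine ⟨max N₁ N₂, fun n hn => ?_⟩
  have d1 := hN₁ n (le_trans (le_max_left _ _) hn)
  have d2 := hN₂ n (le_trans (le_max_right _ _) hn)
  rw [Real.dist_eq, abs_sub_lt_iff] at d1 d2
  -- notation
  set a := ∫ z in Set.Ioc (0:ℝ) (M:ℝ), h' z * g' z
  set an := ∫ z in Set.Ioc (0:ℝ) (M:ℝ), h n z * g n z
  set b := ∫ z in Set.Ioc (0:ℝ) (M:ℝ), h' z
  set bn := ∫ z in Set.Ioc (0:ℝ) (M:ℝ), h n z
  set t := ∫ z in Set.Ioi (M:ℝ), h' z * g' z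
  set tn := ∫ z in Set.Ioi (M:ℝ), h n z * g n z
  have hsn := hsplit _ (hprodint n)
  have hs' := hsplit _ h'prodint
  have hsh := hsplit _ (hint n)
  rw [hmass n] at hsh
  have hsh' := hsplit _ h'int
  rw [hmass'] at hsh'
  have ht1 : |tn| ≤ K * (1 - bn) := by
    have := htail n
    rwa [show ∫ z in Set.Ioi (M:ℝ), h n z = 1 - bn by linarith] at this
  have ht2 : |t| ≤ K * (1 - b) := by
    have := h'tailbd
    rwa [show ∫ z in Set.Ioi (M:ℝ), h' z = 1 - b by linarith] at this
  have hb : 1 - ε' < b := hM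
  have hKb1 : K * (1 - bn) ≤ K * (2 * ε') :=
    mul_le_mul_of_nonneg_left (by linarith [d2.1, d2.2]) hK
  have hKb2 : K * (1 - b) ≤ K * ε' := mul_le_mul_of_nonneg_left (by linarith) hK
  have hq1 : K * (2 * ε') = 2 * (K * ε') := by ring
  have hq2 : (1 + 3*K) * ε' = ε' + 3 * (K * ε') := by ring
  have hKe : (1 + 3*K) * ε' = ε := by
    rw [hε'def]
    field_simp
  rw [Real.dist_eq, abs_sub_lt_iff]
  have ha1 := abs_le.mp ht1
  have ha2 := abs_le.mp ht2
  constructor <;> nlinarith [d1.1, d1.2, ha1.1, ha1.2, ha2.1, ha2.2]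

lemma tail_tendsto {Ω : Type*} [MeasurableSpace Ω] (ℙ : Measure Ω) [IsProbabilityMeasure ℙ]
    (X : ℕ → Ω → ℝ) (Xinf : Ω → ℝ)
    (hXmeas : ∀ c, Measurable (X c)) (hXinfmeas : Measurable Xinf)
    (hconv : ∀ f : BoundedContinuousFunction ℝ ℝ,
      Tendsto (fun c : ℕ => ∫ ω, f (X c ω / c) ∂ℙ) atTop (𝓝 (∫ ω, f (Xinf ω) ∂ℙ)))
    {z : ℝ} (hz : 0 < z) (hatom : ℙ {ω | Xinf ω = z} = 0) :
    Tendsto (fun c : ℕ => (ℙ {ω | (⌈(c:ℝ)*z⌉₊ : ℝ) ≤ X c ω}).toReal) atTop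
      (𝓝 ((ℙ {ω | z ≤ Xinf ω}).toReal)) := by
  -- probability measures
  set P : ℕ → ProbabilityMeasure ℝ := fun c =>
    ⟨ℙ.map (fun ω => X c ω / (c:ℝ)),
      Measure.isProbabilityMeasure_map ((hXmeas c).div_const (c:ℝ)).aemeasurable⟩ with hPdef
  set Pinf : ProbabilityMeasure ℝ :=
    ⟨ℙ.map Xinf, Measure.isProbabilityMeasure_map hXinfmeas.aemeasurable⟩ with hPinfdef
  have hP : Tendsto P atTop (𝓝 Pinf) := by
    rw [ProbabilityMeasure.tendsto_iff_forall_integral_tendsto]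
    intro f
    have h1 : ∀ c : ℕ, ∫ x, f x ∂(P c : Measure ℝ) = ∫ ω, f (X c ω / (c:ℝ)) ∂ℙ := fun c =>
      integral_map ((hXmeas c).div_const (c:ℝ)).aemeasurable
        f.continuous.measurable.aestronglyMeasurable
    have h2 : ∫ x, f x ∂(Pinf : Measure ℝ) = ∫ ω, f (Xinf ω) ∂ℙ :=
      integral_map hXinfmeas.aemeasurable f.continuous.measurable.aestronglyMeasurable
    simp_rw [h1, h2]
    exact hconv f
  -- measure of Ici converges at non-atoms
  have key : ∀ t : ℝ, ℙ {ω | Xinf ω = t} = 0 →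
      Tendsto (fun c : ℕ => (ℙ {ω | t ≤ X c ω / (c:ℝ)}).toReal) atTop
        (𝓝 ((ℙ {ω | t ≤ Xinf ω}).toReal)) := by
    intro t ht
    have hpre : Xinf ⁻¹' {t} = {ω | Xinf ω = t} := by ext ω; simp
    have hfr : Pinf (frontier (Set.Ici t)) = 0 := by
      rw [frontier_Ici]
      have h0 : (Pinf : Measure ℝ) {t} = 0 := by
        show (ℙ.map Xinf) {t} = 0
        rw [Measure.map_apply hXinfmeas (measurableSet_singleton t), hpre, ht]
      show ((Pinf : Measure ℝ) {t}).toNNReal = 0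
      rw [h0]; rfl
    have hT := ProbabilityMeasure.tendsto_measure_of_null_frontier_of_tendsto hP hfr
    have hTR := NNReal.tendsto_coe.mpr hT
    have hcoe : ∀ c : ℕ, ((P c (Set.Ici t)) : ℝ) = (ℙ {ω | t ≤ X c ω / (c:ℝ)}).toReal := by
      intro c
      show ((P c : Measure ℝ) (Set.Ici t)).toReal = _
      have : (P c : Measure ℝ) (Set.Ici t) = ℙ {ω | t ≤ X c ω / (c:ℝ)} :=
        Measure.map_apply ((hXmeas c).div_const (c:ℝ)) measurableSet_Ici
      rw [this]
    have hcoe2 : ((Pinf (Set.Ici t)) : ℝ) = (ℙ {ω | t ≤ Xinf ω}).toReal := by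
      show ((Pinf : Measure ℝ) (Set.Ici t)).toReal = _
      have : (Pinf : Measure ℝ) (Set.Ici t) = ℙ {ω | t ≤ Xinf ω} :=
        Measure.map_apply hXinfmeas measurableSet_Ici
      rw [this]
    simp_rw [hcoe, hcoe2] at hTR
    exact hTR
  -- main squeeze
  set L := (ℙ {ω | z ≤ Xinf ω}).toReal with hL
  rw [Metric.tendsto_atTop]
  intro ε hε
  -- atoms are countable
  set A := {t : ℝ | 0 < ℙ {ω | Xinf ω = t}} with hA
  have hAc : A.Countable := Measure.countable_meas_level_set_pos hXinfmeas
  -- measure of {z + 1/(n+1) ≤ Xinf} tends to L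
  have hmono : Monotone (fun n : ℕ => {ω | z + 1/((n:ℝ)+1) ≤ Xinf ω}) := by
    intro a b hab ω hω
    simp only [Set.mem_setOf_eq] at hω ⊢
    have h1 : 1/((b:ℝ)+1) ≤ 1/((a:ℝ)+1) := by
      apply one_div_le_one_div_of_le (by positivity)
      exact_mod_cast Nat.add_le_add_right hab 1
    linarith
  have hU : (⋃ n : ℕ, {ω | z + 1/((n:ℝ)+1) ≤ Xinf ω}) = {ω | z < Xinf ω} := by
    ext ω
    simp only [Set.mem_iUnion, Set.mem_setOf_eq]
    constructor
    · rintro ⟨n, hn⟩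
      have : (0:ℝ) < 1/((n:ℝ)+1) := by positivity
      linarith
    · intro hω
      obtain ⟨n, hn⟩ := exists_nat_one_div_lt (show (0:ℝ) < Xinf ω - z by linarith)
      exact ⟨n, by linarith⟩
  have hlt : ℙ {ω | z < Xinf ω} = ℙ {ω | z ≤ Xinf ω} := by
    refine le_antisymm (measure_mono (fun ω h => by simp only [Set.mem_setOf_eq] at h ⊢; exact h.le)) ?_
    calc ℙ {ω | z ≤ Xinf ω} ≤ ℙ ({ω | z < Xinf ω} ∪ {ω | Xinf ω = z}) := by
          refine measure_mono (fun ω h => ?_)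
          simp only [Set.mem_setOf_eq] at h
          simp only [Set.mem_union, Set.mem_setOf_eq]
          rcases h.lt_or_eq with h' | h'
          · exact Or.inl h'
          · exact Or.inr h'.symm
    _ ≤ ℙ {ω | z < Xinf ω} + ℙ {ω | Xinf ω = z} := measure_union_le _ _
    _ = ℙ {ω | z < Xinf ω} := by rw [hatom, add_zero]
  have hten := tendsto_measure_iUnion_atTop (μ := ℙ) hmono
  rw [hU, hlt] at hten
  have htenR : Tendsto (fun n : ℕ => (ℙ {ω | z + 1/((n:ℝ)+1) ≤ Xinf ω}).toReal) atTop
      (𝓝 L) := by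
    have := (ENNReal.tendsto_toReal (measure_ne_top ℙ _)).comp hten
    exact this
  obtain ⟨n₀, hn₀⟩ := (htenR.eventually_const_lt (show L - ε/2 < L by linarith)).exists
  set δ₀ := 1/((n₀:ℝ)+1) with hδ₀
  have hδ₀pos : 0 < δ₀ := by positivity
  -- pick a non-atom z + δ with 0 < δ < δ₀
  have hex : ∃ δ : ℝ, δ ∈ Set.Ioo 0 δ₀ ∧ z + δ ∉ A := by
    by_contra hcon
    push_neg at hcon
    have hsub : Set.Ioo z (z+δ₀) ⊆ (fun t => z + t) '' (Set.Ioo 0 δ₀) := by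
      intro t ht
      exact ⟨t - z, ⟨by linarith [ht.1], by linarith [ht.2]⟩, by ring⟩
    have hsub2 : Set.Ioo z (z+δ₀) ⊆ A := by
      intro t ht
      obtain ⟨d, hd, rfl⟩ := hsub ht
      exact hcon d hd
    have h0 : volume A = 0 := hAc.measure_zero volume
    have h1 : volume (Set.Ioo z (z+δ₀)) = 0 := measure_mono_null hsub2 h0
    rw [Real.volume_Ioo] at h1
    have := ENNReal.ofReal_eq_zero.mp h1
    linarith
  obtain ⟨δ, hδmem, hδA⟩ := hex
  have hδpos : 0 < δ := hδmem.1
  have hatomδ : ℙ {ω | Xinf ω = z + δ} = 0 := by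
    by_contra h
    exact hδA (pos_iff_ne_zero.mpr h)
  have hδlow : L - ε/2 < (ℙ {ω | z + δ ≤ Xinf ω}).toReal := by
    refine lt_of_lt_of_le hn₀ (ENNReal.toReal_mono (measure_ne_top _ _)
      (measure_mono (fun ω hω => ?_)))
    simp only [Set.mem_setOf_eq] at hω ⊢
    have : δ ≤ δ₀ := hδmem.2.le
    linarith
  -- eventual bounds
  have hup := key z hatom
  have hlow := key (z+δ) hatomδ
  have e1 : ∀ᶠ c : ℕ in atTop, (ℙ {ω | z ≤ X c ω / (c:ℝ)}).toReal < L + ε :=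
    hup.eventually_lt_const (by linarith)
  have e2 : ∀ᶠ c : ℕ in atTop, L - ε < (ℙ {ω | z + δ ≤ X c ω / (c:ℝ)}).toReal :=
    hlow.eventually_const_lt (by linarith)
  have e3 : ∀ᶠ c : ℕ in atTop, 1 ≤ c := eventually_ge_atTop 1
  have e4 : ∀ᶠ c : ℕ in atTop, 1/(c:ℝ) < δ :=
    tendsto_one_div_atTop_nhds_zero_nat.eventually_lt_const hδpos
  have efin : ∀ᶠ c : ℕ in atTop,
      dist (ℙ {ω | (⌈(c:ℝ)*z⌉₊ : ℝ) ≤ X c ω}).toReal L < ε := by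
    filter_upwards [e1, e2, e3, e4] with c h1 h2 h3 h4
    have hc0 : (0:ℝ) < (c:ℝ) := by exact_mod_cast h3
    -- upper bound
    have hsubU : {ω | (⌈(c:ℝ)*z⌉₊ : ℝ) ≤ X c ω} ⊆ {ω | z ≤ X c ω / (c:ℝ)} := by
      intro ω hω
      simp only [Set.mem_setOf_eq] at hω ⊢
      rw [le_div_iff₀ hc0]
      calc z * (c:ℝ) = (c:ℝ) * z := mul_comm _ _
      _ ≤ (⌈(c:ℝ)*z⌉₊ : ℝ) := Nat.le_ceil _
      _ ≤ X c ω := hω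
    -- lower bound
    have hsubL : {ω | z + δ ≤ X c ω / (c:ℝ)} ⊆ {ω | (⌈(c:ℝ)*z⌉₊ : ℝ) ≤ X c ω} := by
      intro ω hω
      simp only [Set.mem_setOf_eq] at hω ⊢
      rw [le_div_iff₀ hc0] at hω
      have h5 : ((⌈(c:ℝ)*z⌉₊ : ℝ)) < (c:ℝ)*z + 1 :=
        Nat.ceil_lt_add_one (by positivity)
      have h6 : (1:ℝ) ≤ (c:ℝ) * δ := by
        rw [div_lt_iff₀ hc0] at h4
        linarith
      nlinarith
    have hU := ENNReal.toReal_mono (measure_ne_top ℙ _) (measure_mono hsubU)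
    have hLo := ENNReal.toReal_mono (measure_ne_top ℙ _) (measure_mono hsubL)
    rw [Real.dist_eq, abs_sub_lt_iff]
    constructor <;> linarith
  obtain ⟨N, hN⟩ := eventually_atTop.mp efin
  exact ⟨N, hN⟩


lemma law_eq_aux {Ω : Type*} [MeasurableSpace Ω] (ℙ : Measure Ω) [IsProbabilityMeasure ℙ]
    (W : Ω → ℝ) (hW : Measurable W) (d : ℕ → ENNReal) (c : ℕ) (hc : 1 ≤ c)
    (hWnat : ∀ ω, ∃ k : ℕ, 1 ≤ k ∧ W ω = k)
    (hcdf : ∀ y : ℕ, ℙ {ω | W ω ≤ (y:ℝ)}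
      = (∑ k ∈ Finset.Icc 1 y, d k) * ENNReal.ofReal (1/(c:ℝ)))
    (hstep : ∀ n : ℕ, ∫⁻ z in Set.Ioc (0:ℝ) ((n:ℝ)/(c:ℝ)), d ⌈(c:ℝ)*z⌉₊
      = (∑ k ∈ Finset.Icc 1 n, d k) * ENNReal.ofReal (1/(c:ℝ))) :
    ℙ.map (fun ω => W ω / (c:ℝ))
      = Measure.map (fun z : ℝ => ((⌈(c:ℝ)*z⌉₊ : ℕ) : ℝ)/(c:ℝ))
          ((volume.restrict (Set.Ioi 0)).withDensity (fun z => d ⌈(c:ℝ)*z⌉₊)) := by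
  have hc0 : (0:ℝ) < (c:ℝ) := by exact_mod_cast hc
  have hceil : Measurable (fun z : ℝ => (⌈(c:ℝ)*z⌉₊ : ℕ)) :=
    Nat.measurable_ceil.comp (measurable_id.const_mul _)
  have hφ : Measurable (fun z : ℝ => ((⌈(c:ℝ)*z⌉₊ : ℕ) : ℝ)/(c:ℝ)) :=
    (measurable_from_top.comp hceil).div_const _
  have hdmeas : Measurable (fun z : ℝ => d ⌈(c:ℝ)*z⌉₊) :=
    measurable_from_top.comp hceil
  haveI : IsProbabilityMeasure (ℙ.map (fun ω => W ω / (c:ℝ))) :=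
    Measure.isProbabilityMeasure_map (hW.div_const _).aemeasurable
  refine Measure.ext_of_Iic _ _ (fun y => ?_)
  -- LHS
  rw [Measure.map_apply (hW.div_const _) measurableSet_Iic]
  have hset : (fun ω => W ω / (c:ℝ)) ⁻¹' (Set.Iic y) = {ω | W ω ≤ ((⌊(c:ℝ)*y⌋₊ : ℕ) : ℝ)} := by
    ext ω
    obtain ⟨k, hk1, hk⟩ := hWnat ω
    simp only [Set.mem_preimage, Set.mem_Iic, Set.mem_setOf_eq, hk]
    rw [div_le_iff₀ hc0]
    constructor
    · intro h
      have h2 : (k:ℕ) ≤ ⌊(c:ℝ)*y⌋₊ := by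
        rw [Nat.le_floor_iff' (by omega)]
        calc (k:ℝ) ≤ y * c := h
        _ = (c:ℝ) * y := mul_comm _ _
      exact_mod_cast h2
    · intro h
      have h2 : (k:ℕ) ≤ ⌊(c:ℝ)*y⌋₊ := by exact_mod_cast h
      rw [Nat.le_floor_iff' (by omega)] at h2
      calc (k:ℝ) ≤ (c:ℝ) * y := h2
      _ = y * c := mul_comm _ _
  rw [hset, hcdf ⌊(c:ℝ)*y⌋₊]
  -- RHS
  rw [Measure.map_apply hφ measurableSet_Iic,
    withDensity_apply _ (hφ measurableSet_Iic),
    Measure.restrict_restrict (hφ measurableSet_Iic)]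
  have hset2 : (fun z : ℝ => ((⌈(c:ℝ)*z⌉₊ : ℕ) : ℝ)/(c:ℝ)) ⁻¹' (Set.Iic y) ∩ Set.Ioi 0
      = Set.Ioc (0:ℝ) (((⌊(c:ℝ)*y⌋₊ : ℕ) : ℝ)/(c:ℝ)) := by
    ext z
    simp only [Set.mem_inter_iff, Set.mem_preimage, Set.mem_Iic, Set.mem_Ioi, Set.mem_Ioc]
    constructor
    · rintro ⟨h1, h2⟩
      refine ⟨h2, ?_⟩
      rw [div_le_iff₀ hc0] at h1
      rw [le_div_iff₀ hc0]
      have hne : ⌈(c:ℝ)*z⌉₊ ≠ 0 := by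
        rw [← Nat.pos_iff_ne_zero, Nat.ceil_pos]
        positivity
      have h3 : (⌈(c:ℝ)*z⌉₊ : ℕ) ≤ ⌊(c:ℝ)*y⌋₊ := by
        rw [Nat.le_floor_iff' hne]
        calc ((⌈(c:ℝ)*z⌉₊ : ℕ) : ℝ) ≤ y * (c:ℝ) := h1
        _ = (c:ℝ) * y := mul_comm _ _
      rw [Nat.ceil_le] at h3
      calc z * (c:ℝ) = (c:ℝ) * z := mul_comm _ _
      _ ≤ (⌊(c:ℝ)*y⌋₊ : ℝ) := h3
    · rintro ⟨h1, h2⟩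
      refine ⟨?_, h1⟩
      rcases le_or_gt 0 ((c:ℝ)*y) with hy | hy
      · rw [le_div_iff₀ hc0] at h2
        rw [div_le_iff₀ hc0]
        have h3 : (c:ℝ) * z ≤ (⌊(c:ℝ)*y⌋₊ : ℝ) := by
          calc (c:ℝ) * z = z * (c:ℝ) := mul_comm _ _
          _ ≤ _ := h2
        have h4 : (⌈(c:ℝ)*z⌉₊ : ℕ) ≤ ⌊(c:ℝ)*y⌋₊ := Nat.ceil_le.mpr h3
        have h5 : ((⌊(c:ℝ)*y⌋₊ : ℕ) : ℝ) ≤ y * (c:ℝ) := by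
          have := Nat.floor_le hy
          calc ((⌊(c:ℝ)*y⌋₊ : ℕ) : ℝ) ≤ (c:ℝ)*y := this
          _ = y * (c:ℝ) := mul_comm _ _
        calc ((⌈(c:ℝ)*z⌉₊ : ℕ) : ℝ) ≤ ((⌊(c:ℝ)*y⌋₊ : ℕ) : ℝ) := by exact_mod_cast h4
        _ ≤ y * (c:ℝ) := h5
      · exfalso
        rw [le_div_iff₀ hc0, Nat.floor_of_nonpos hy.le, Nat.cast_zero] at h2
        nlinarith
  rw [hset2, hstep ⌊(c:ℝ)*y⌋₊]

lemma law_eq_inf {Ω : Type*} [MeasurableSpace Ω] (ℙ : Measure Ω) [IsProbabilityMeasure ℙ]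
    (W : Ω → ℝ) (hW : Measurable W) (G : ℝ → ℝ) (hG : Measurable G)
    (hGnn : ∀ z, 0 ≤ G z) (B : ℝ) (hGbd : ∀ z, G z ≤ B)
    (hcdf : ∀ y : ℝ, 0 ≤ y → (ℙ {ω | W ω ≤ y}).toReal = ∫ z in Set.Ioc (0:ℝ) y, G z) :
    ℙ.map W = (volume.restrict (Set.Ioi 0)).withDensity (fun z => ENNReal.ofReal (G z)) := by
  haveI : IsProbabilityMeasure (ℙ.map W) := Measure.isProbabilityMeasure_map hW.aemeasurable
  refine Measure.ext_of_Iic _ _ (fun y => ?_)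
  rw [Measure.map_apply hW measurableSet_Iic,
    withDensity_apply _ measurableSet_Iic, Measure.restrict_restrict measurableSet_Iic]
  have hpre : W ⁻¹' (Set.Iic y) = {ω | W ω ≤ y} := rfl
  rw [hpre]
  rcases le_or_gt 0 y with hy | hy
  · have hinter : Set.Iic y ∩ Set.Ioi (0:ℝ) = Set.Ioc (0:ℝ) y := by
      ext z
      simp only [Set.mem_inter_iff, Set.mem_Iic, Set.mem_Ioi, Set.mem_Ioc]
      tauto
    rw [hinter]
    have hint : IntegrableOn G (Set.Ioc (0:ℝ) y) := by
      refine Integrable.mono' (g := fun _ => B) ((integrableOn_const_iff).mpr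
        (Or.inr (Real.volume_Ioc ▸ ENNReal.ofReal_lt_top))) hG.aestronglyMeasurable ?_
      exact Filter.Eventually.of_forall (fun z => by
        rw [Real.norm_eq_abs, abs_of_nonneg (hGnn z)]; exact hGbd z)
    have h1 : ENNReal.ofReal ((ℙ {ω | W ω ≤ y}).toReal)
        = ENNReal.ofReal (∫ z in Set.Ioc (0:ℝ) y, G z) := by rw [hcdf y hy]
    rw [ENNReal.ofReal_toReal (measure_ne_top _ _)] at h1
    rw [h1, ofReal_integral_eq_lintegral_ofReal hint
      (Filter.Eventually.of_forall (fun z => hGnn z))]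
  · have hzero : ℙ {ω | W ω ≤ y} = 0 := by
      have h0 : ℙ {ω | W ω ≤ 0} = 0 := by
        have := hcdf 0 le_rfl
        rw [Set.Ioc_self, Measure.restrict_empty, integral_zero_measure] at this
        exact (ENNReal.toReal_eq_zero_iff _).mp this |>.resolve_right (measure_ne_top _ _)
      refine measure_mono_null (fun ω hω => ?_) h0
      simp only [Set.mem_setOf_eq] at hω ⊢
      linarith
    have hempty : Set.Iic y ∩ Set.Ioi (0:ℝ) = ∅ := by
      ext z
      simp only [Set.mem_inter_iff, Set.mem_Iic, Set.mem_Ioi, Set.mem_empty_iff_false,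
        iff_false, not_and, not_lt]
      intro h
      linarith
    rw [hzero, hempty, Measure.restrict_empty, lintegral_zero_measure]

open MeasureTheory Filter Topology BoundedContinuousFunction

/-- Lemma 6.1 of the paper: if `X⁽ᶜ⁾/c ⇒ X⁽∞⁾`, then the equilibrium (size-biased
residual) versions satisfy `X̄⁽ᶜ⁾/c ⇒ X̄⁽∞⁾`.  Here the `X⁽ᶜ⁾` are `ℕ`-valued with
mean `c/μ₀`, `X⁽∞⁾` is nonnegative with mean `1/μ₀`, the law of `X̄⁽ᶜ⁾` is given by
`ℙ(X̄⁽ᶜ⁾ ≤ y) = (μ₀/c) ∑_{z=1}^y ℙ(X⁽ᶜ⁾ ≥ z)` and that of `X̄⁽∞⁾` by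
`ℙ(X̄⁽∞⁾ ≤ y) = μ₀ ∫_0^y ℙ(X⁽∞⁾ ≥ z) dz`, and weak convergence is convergence of
expectations of bounded continuous functions. -/
theorem equilibrium_weak_convergence {Ω : Type*} [MeasurableSpace Ω]
    (ℙ : Measure Ω) [IsProbabilityMeasure ℙ] (μ₀ : ℝ) (hμ₀ : 0 < μ₀)
    (X : ℕ → Ω → ℝ) (Xinf : Ω → ℝ)
    (hXmeas : ∀ c, Measurable (X c)) (hXinfmeas : Measurable Xinf)
    -- the prelimit document sizes are `ℕ = {1,2,…}`-valued with mean `c/μ₀`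
    (hXnat : ∀ c : ℕ, 1 ≤ c → ∀ ω, ∃ k : ℕ, 1 ≤ k ∧ X c ω = k)
    (hXmean : ∀ c : ℕ, 1 ≤ c → ∫ ω, X c ω ∂ℙ = c / μ₀)
    -- the limit document size is nonnegative with mean `1/μ₀`
    (hXinfpos : ∀ ω, 0 ≤ Xinf ω) (hXinfint : Integrable Xinf ℙ)
    (hXinfmean : ∫ ω, Xinf ω ∂ℙ = 1 / μ₀)
    -- the equilibrium versions
    (Xbar : ℕ → Ω → ℝ) (Xbarinf : Ω → ℝ)
    (hXbarmeas : ∀ c, Measurable (Xbar c)) (hXbarinfmeas : Measurable Xbarinf)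
    (hXbarnat : ∀ c : ℕ, 1 ≤ c → ∀ ω, ∃ k : ℕ, 1 ≤ k ∧ Xbar c ω = k)
    (hXbarcdf : ∀ c : ℕ, 1 ≤ c → ∀ y : ℕ,
      (ℙ {ω | Xbar c ω ≤ (y : ℝ)}).toReal
        = (μ₀ / c) * ∑ z ∈ Finset.Icc 1 y, (ℙ {ω | (z : ℝ) ≤ X c ω}).toReal)
    (hXbarinfcdf : ∀ y : ℝ, 0 ≤ y →
      (ℙ {ω | Xbarinf ω ≤ y}).toReal
        = μ₀ * ∫ z in Set.Ioc (0:ℝ) y, (ℙ {ω | z ≤ Xinf ω}).toReal)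
    -- weak convergence of `X⁽ᶜ⁾/c` to `X⁽∞⁾`
    (hconv : ∀ f : BoundedContinuousFunction ℝ ℝ,
      Tendsto (fun c : ℕ => ∫ ω, f (X c ω / c) ∂ℙ) atTop (𝓝 (∫ ω, f (Xinf ω) ∂ℙ))) :
    -- then `X̄⁽ᶜ⁾/c` converges weakly to `X̄⁽∞⁾`
    ∀ f : BoundedContinuousFunction ℝ ℝ,
      Tendsto (fun c : ℕ => ∫ ω, f (Xbar c ω / c) ∂ℙ) atTop
        (𝓝 (∫ ω, f (Xbarinf ω) ∂ℙ)) := by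
  intro f
  -- the limiting tail function
  set G : ℝ → ℝ := fun t => (ℙ {ω | t ≤ Xinf ω}).toReal with hGdef
  have hGanti : Antitone G := by
    intro s t hst
    exact ENNReal.toReal_mono (measure_ne_top _ _)
      (measure_mono (fun ω hω => by
        simp only [Set.mem_setOf_eq] at hω ⊢; linarith))
  have hGmeas : Measurable G := hGanti.measurable
  have hGnn : ∀ z, 0 ≤ G z := fun z => ENNReal.toReal_nonneg
  have hGbd : ∀ z, G z ≤ 1 := fun z => by
    have h1 : ℙ {ω | z ≤ Xinf ω} ≤ 1 := prob_le_one
    have := ENNReal.toReal_mono ENNReal.one_ne_top h1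
    simpa using this
  -- prelimit densities
  set H : ℕ → ℝ → ℝ := fun c z =>
    μ₀ * (ℙ {ω | ((⌈(c:ℝ)*z⌉₊ : ℕ) : ℝ) ≤ X c ω}).toReal with hHdef
  set d : ℕ → ℕ → ENNReal := fun c k =>
    ENNReal.ofReal (μ₀ * (ℙ {ω | (k : ℝ) ≤ X c ω}).toReal) with hddef
  set φ : ℕ → ℝ → ℝ := fun c z => ((⌈(c:ℝ)*z⌉₊ : ℕ) : ℝ)/(c:ℝ) with hφdef
  have hceil : ∀ c : ℕ, Measurable (fun z : ℝ => (⌈(c:ℝ)*z⌉₊ : ℕ)) := fun c =>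
    Nat.measurable_ceil.comp (measurable_id.const_mul _)
  have hφmeas : ∀ c : ℕ, Measurable (φ c) := fun c =>
    (measurable_from_top.comp (hceil c)).div_const _
  have hHmeas : ∀ c : ℕ, Measurable (H c) := fun c =>
    (measurable_from_top
      (f := fun k : ℕ => μ₀ * (ℙ {ω | (k : ℝ) ≤ X c ω}).toReal)).comp (hceil c)
  have hHnn : ∀ c z, 0 ≤ H c z := fun c z =>
    mul_nonneg hμ₀.le ENNReal.toReal_nonneg
  have hHbd : ∀ c z, H c z ≤ μ₀ := fun c z => by
    have h1 : (ℙ {ω | ((⌈(c:ℝ)*z⌉₊ : ℕ) : ℝ) ≤ X c ω}).toReal ≤ 1 := by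
      have h2 : ℙ {ω | ((⌈(c:ℝ)*z⌉₊ : ℕ) : ℝ) ≤ X c ω} ≤ 1 := prob_le_one
      have := ENNReal.toReal_mono ENNReal.one_ne_top h2
      simpa using this
    calc H c z ≤ μ₀ * 1 := mul_le_mul_of_nonneg_left h1 hμ₀.le
    _ = μ₀ := mul_one _
  -- ENNReal version of the prelimit cdf
  have hcdf' : ∀ c : ℕ, 1 ≤ c → ∀ y : ℕ, ℙ {ω | Xbar c ω ≤ (y:ℝ)}
      = (∑ k ∈ Finset.Icc 1 y, d c k) * ENNReal.ofReal (1/(c:ℝ)) := by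
    intro c hc y
    have hc0 : (0:ℝ) < (c:ℝ) := by exact_mod_cast hc
    have hnn : ∀ k ∈ Finset.Icc 1 y, 0 ≤ μ₀ * (ℙ {ω | (k : ℝ) ≤ X c ω}).toReal :=
      fun k _ => mul_nonneg hμ₀.le ENNReal.toReal_nonneg
    have h1 : ∑ k ∈ Finset.Icc 1 y, d c k
        = ENNReal.ofReal (∑ k ∈ Finset.Icc 1 y, μ₀ * (ℙ {ω | (k : ℝ) ≤ X c ω}).toReal) :=
      (ENNReal.ofReal_sum_of_nonneg hnn).symm
    have hSnn : 0 ≤ ∑ k ∈ Finset.Icc 1 y, μ₀ * (ℙ {ω | (k : ℝ) ≤ X c ω}).toReal :=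
      Finset.sum_nonneg hnn
    rw [h1, ← ENNReal.ofReal_mul hSnn]
    have h2 : (∑ k ∈ Finset.Icc 1 y, μ₀ * (ℙ {ω | (k : ℝ) ≤ X c ω}).toReal) * (1/(c:ℝ))
        = (μ₀ / (c:ℝ)) * ∑ k ∈ Finset.Icc 1 y, (ℙ {ω | (k : ℝ) ≤ X c ω}).toReal := by
      rw [Finset.sum_mul, Finset.mul_sum]
      refine Finset.sum_congr rfl (fun k _ => ?_)
      field_simp
    rw [h2, ← hXbarcdf c hc y, ENNReal.ofReal_toReal (measure_ne_top _ _)]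
  -- prelimit law identification
  have hlaw : ∀ c : ℕ, 1 ≤ c →
      ℙ.map (fun ω => Xbar c ω / (c:ℝ))
        = Measure.map (φ c)
            ((volume.restrict (Set.Ioi 0)).withDensity (fun z => d c ⌈(c:ℝ)*z⌉₊)) := by
    intro c hc
    have hc0 : (0:ℝ) < (c:ℝ) := by exact_mod_cast hc
    exact law_eq_aux ℙ (Xbar c) (hXbarmeas c) (d c) c hc (hXbarnat c hc) (hcdf' c hc)
      (fun n => step_lintegral (d c) (c:ℝ) hc0 n)
  -- limit law identification
  have hlawinf : ℙ.map Xbarinf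
      = (volume.restrict (Set.Ioi 0)).withDensity (fun z => ENNReal.ofReal (μ₀ * G z)) := by
    refine law_eq_inf ℙ Xbarinf hXbarinfmeas (fun z => μ₀ * G z) (hGmeas.const_mul μ₀)
      (fun z => mul_nonneg hμ₀.le (hGnn z)) μ₀
      (fun z => by
        calc μ₀ * G z ≤ μ₀ * 1 := mul_le_mul_of_nonneg_left (hGbd z) hμ₀.le
        _ = μ₀ := mul_one _) ?_
    intro y hy
    rw [hXbarinfcdf y hy, ← integral_const_mul]
  -- masses
  have hmass : ∀ c : ℕ, 1 ≤ c →
      (∫⁻ z in Set.Ioi (0:ℝ), ENNReal.ofReal (H c z)) = 1 := by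
    intro c hc
    haveI : IsProbabilityMeasure (ℙ.map (fun ω => Xbar c ω / (c:ℝ))) :=
      Measure.isProbabilityMeasure_map ((hXbarmeas c).div_const _).aemeasurable
    have h1 : (Measure.map (φ c)
        ((volume.restrict (Set.Ioi 0)).withDensity (fun z => d c ⌈(c:ℝ)*z⌉₊)))
          Set.univ = 1 := by
      rw [← hlaw c hc]; exact measure_univ
    rw [Measure.map_apply (hφmeas c) MeasurableSet.univ, Set.preimage_univ,
      withDensity_apply _ MeasurableSet.univ, Measure.restrict_univ] at h1
    exact h1
  have hmassinf : (∫⁻ z in Set.Ioi (0:ℝ), ENNReal.ofReal (μ₀ * G z)) = 1 := by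
    have h1 : (ℙ.map Xbarinf) Set.univ = 1 := by
      haveI : IsProbabilityMeasure (ℙ.map Xbarinf) :=
        Measure.isProbabilityMeasure_map hXbarinfmeas.aemeasurable
      exact measure_univ
    rw [hlawinf, withDensity_apply _ MeasurableSet.univ, Measure.restrict_univ] at h1
    exact h1
  -- real-valued masses and integrability
  have hintH : ∀ c : ℕ, 1 ≤ c → IntegrableOn (H c) (Set.Ioi 0) := by
    intro c hc
    refine ⟨(hHmeas c).aestronglyMeasurable, ?_⟩
    rw [hasFiniteIntegral_iff_ofReal (Filter.Eventually.of_forall (hHnn c))]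
    rw [hmass c hc]
    exact ENNReal.one_lt_top
  have hmassR : ∀ c : ℕ, 1 ≤ c → ∫ z in Set.Ioi (0:ℝ), H c z = 1 := by
    intro c hc
    rw [integral_eq_lintegral_of_nonneg_ae (Filter.Eventually.of_forall (hHnn c))
      (hHmeas c).aestronglyMeasurable, hmass c hc]
    rfl
  have hintG : IntegrableOn (fun z => μ₀ * G z) (Set.Ioi 0) := by
    refine ⟨(hGmeas.const_mul μ₀).aestronglyMeasurable, ?_⟩
    rw [hasFiniteIntegral_iff_ofReal
      (Filter.Eventually.of_forall (fun z => mul_nonneg hμ₀.le (hGnn z)))]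
    rw [hmassinf]
    exact ENNReal.one_lt_top
  have hmassinfR : ∫ z in Set.Ioi (0:ℝ), μ₀ * G z = 1 := by
    rw [integral_eq_lintegral_of_nonneg_ae
      (Filter.Eventually.of_forall (fun z => mul_nonneg hμ₀.le (hGnn z)))
      (hGmeas.const_mul μ₀).aestronglyMeasurable, hmassinf]
    rfl
  -- integral reduction
  have hred : ∀ c : ℕ, 1 ≤ c →
      ∫ ω, f (Xbar c ω / (c:ℝ)) ∂ℙ = ∫ z in Set.Ioi (0:ℝ), H c z * f (φ c z) := by
    intro c hc
    have step1 : ∫ ω, f (Xbar c ω / (c:ℝ)) ∂ℙ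
        = ∫ x, f x ∂(ℙ.map (fun ω => Xbar c ω / (c:ℝ))) :=
      (integral_map ((hXbarmeas c).div_const _).aemeasurable
        f.continuous.measurable.aestronglyMeasurable).symm
    rw [step1, hlaw c hc,
      integral_map (hφmeas c).aemeasurable f.continuous.measurable.aestronglyMeasurable]
    have step4 : ∫ z, f (φ c z)
          ∂((volume.restrict (Set.Ioi 0)).withDensity (fun z => d c ⌈(c:ℝ)*z⌉₊))
        = ∫ z in Set.Ioi (0:ℝ), ((H c z).toNNReal : ℝ≥0) • f (φ c z) :=
      integral_withDensity_eq_integral_smul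
        (f := fun z => (H c z).toNNReal) ((hHmeas c).real_toNNReal) _
    rw [step4]
    have step5 : (fun z => ((H c z).toNNReal : ℝ≥0) • f (φ c z))
        = fun z => H c z * f (φ c z) := by
      funext z
      rw [NNReal.smul_def, Real.coe_toNNReal _ (hHnn c z), smul_eq_mul]
    rw [step5]
  have hredinf : ∫ ω, f (Xbarinf ω) ∂ℙ = ∫ z in Set.Ioi (0:ℝ), (μ₀ * G z) * f z := by
    have step1 : ∫ ω, f (Xbarinf ω) ∂ℙ = ∫ x, f x ∂(ℙ.map Xbarinf) :=
      (integral_map hXbarinfmeas.aemeasurable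
        f.continuous.measurable.aestronglyMeasurable).symm
    rw [step1, hlawinf]
    have step4 : ∫ x, f x
          ∂((volume.restrict (Set.Ioi 0)).withDensity (fun z => ENNReal.ofReal (μ₀ * G z)))
        = ∫ z in Set.Ioi (0:ℝ), ((μ₀ * G z).toNNReal : ℝ≥0) • f z :=
      integral_withDensity_eq_integral_smul
        (f := fun z => (μ₀ * G z).toNNReal) ((hGmeas.const_mul μ₀).real_toNNReal) _
    rw [step4]
    have step5 : (fun z => ((μ₀ * G z).toNNReal : ℝ≥0) • f z)
        = fun z => (μ₀ * G z) * f z := by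
      funext z
      rw [NNReal.smul_def, Real.coe_toNNReal _ (mul_nonneg hμ₀.le (hGnn z)), smul_eq_mul]
    rw [step5]
  -- a.e. pointwise convergence
  have hnullae : ∀ᵐ z ∂(volume.restrict (Set.Ioi (0:ℝ))), ℙ {ω | Xinf ω = z} = 0 := by
    set A := {t : ℝ | 0 < ℙ {ω | Xinf ω = t}} with hA
    have hAc : A.Countable := Measure.countable_meas_level_set_pos hXinfmeas
    have h0 : volume A = 0 := hAc.measure_zero volume
    have h1 : (volume.restrict (Set.Ioi (0:ℝ))) A = 0 :=
      le_antisymm (le_trans (Measure.restrict_le_self A) h0.le) zero_le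
    rw [ae_iff]
    refine measure_mono_null (fun z hz => ?_) h1
    simp only [Set.mem_setOf_eq] at hz ⊢
    exact pos_iff_ne_zero.mpr hz
  have hae : ∀ᵐ z ∂(volume.restrict (Set.Ioi (0:ℝ))),
      Tendsto (fun n : ℕ => H (n+1) z) atTop (𝓝 (μ₀ * G z))
        ∧ Tendsto (fun n : ℕ => f (φ (n+1) z)) atTop (𝓝 (f z)) := by
    filter_upwards [ae_restrict_mem measurableSet_Ioi, hnullae] with z hz hz0
    have hz' : (0:ℝ) < z := hz
    constructor
    · have h1 := tail_tendsto ℙ X Xinf hXmeas hXinfmeas hconv hz' hz0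
      have h2 := (h1.comp (tendsto_add_atTop_nat 1)).const_mul μ₀
      exact h2
    · have hsq : Tendsto (fun n : ℕ => φ (n+1) z) atTop (𝓝 z) := by
        have hlow : ∀ n : ℕ, z ≤ φ (n+1) z := by
          intro n
          have hc0 : (0:ℝ) < ((n+1:ℕ):ℝ) := by positivity
          rw [hφdef]
          simp only
          rw [le_div_iff₀ hc0]
          calc z * ((n+1:ℕ):ℝ) = ((n+1:ℕ):ℝ) * z := mul_comm _ _
          _ ≤ _ := Nat.le_ceil _
        have hhigh : ∀ n : ℕ, φ (n+1) z ≤ z + 1/((n:ℝ)+1) := by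
          intro n
          have hc0 : (0:ℝ) < ((n+1:ℕ):ℝ) := by positivity
          rw [hφdef]
          simp only
          rw [div_le_iff₀ hc0]
          have h3 : ((⌈((n+1:ℕ):ℝ)*z⌉₊ : ℕ) : ℝ) < ((n+1:ℕ):ℝ)*z + 1 :=
            Nat.ceil_lt_add_one (by positivity)
          have h4 : ((n+1:ℕ):ℝ) = (n:ℝ)+1 := by push_cast; ring
          rw [h4] at h3 ⊢
          have h5 : (0:ℝ) < (n:ℝ)+1 := by positivity
          calc ((⌈((n:ℝ)+1)*z⌉₊ : ℕ) : ℝ) ≤ ((n:ℝ)+1)*z + 1 := h3.le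
          _ = (z + 1/((n:ℝ)+1)) * ((n:ℝ)+1) := by field_simp
        have htendhigh : Tendsto (fun n : ℕ => z + 1/((n:ℝ)+1)) atTop (𝓝 z) := by
          have := tendsto_one_div_add_atTop_nhds_zero_nat (𝕜 := ℝ)
          have h2 := tendsto_const_nhds (x := z) (f := atTop (α := ℕ)) |>.add this
          simpa using h2
        exact tendsto_of_tendsto_of_tendsto_of_le_of_le tendsto_const_nhds htendhigh
          hlow hhigh
      exact (f.continuous.tendsto z).comp hsq
  -- apply the key convergence lemma
  have hkey := key_conv (fun n => H (n+1)) (fun z => μ₀ * G z)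
    (fun n z => f (φ (n+1) z)) (fun z => f z) μ₀ ‖f‖ (norm_nonneg f)
    (fun n => (hHmeas (n+1)).aestronglyMeasurable)
    (fun n => (f.continuous.measurable.comp (hφmeas (n+1))).aestronglyMeasurable)
    ((hGmeas.const_mul μ₀).aestronglyMeasurable)
    (f.continuous.measurable.aestronglyMeasurable)
    (fun n z => hHnn (n+1) z) (fun n z => hHbd (n+1) z)
    hintG
    (fun n z => by rw [← Real.norm_eq_abs]; exact f.norm_coe_le_norm _)
    (fun z => by rw [← Real.norm_eq_abs]; exact f.norm_coe_le_norm _)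
    hae
    (fun n => hmassR (n+1) (by omega))
    hmassinfR
  rw [← tendsto_add_atTop_iff_nat 1, hredinf]
  refine Tendsto.congr (fun n => ?_) hkey
  exact (hred (n+1) (by omega)).symm
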